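/- Let F : ℝ → ℝ be differentiable with |F(x)| ≤ B and |F'(x)| ≤ L for all x ∈ ℝ, where B, L > 0. Let ε > 0, ΔT > 0, M ∈ ℕ, and let U : ℝ → ℝ satisfy U'(t) = ε·F(U(t)) for all t ∈ [0, M·ΔT]. Let δ ≥ 0 and let the discrete approximations U_0, U_1, …, U_M satisfy U_0 = U(0) and U_m = U_{m−1} + ε·ΔT·(F(U_{m−1}) + η_{m−1}) for m = 1, …, M, where |η_{m−1}| ≤ δ. Then the global error satisfies |U_M − U(M·ΔT)| ≤ exp(ε·L·M·ΔT) · ε·M·ΔT · (δ + ε·ΔT·L·B/2). In particular, if ε·M·ΔT ≤ K for a fixed constant K, then |U_M − U(M·ΔT)| ≤ C·(δ + ε·ΔT) with C = e^{LK}·K·max(1, LB/2) independent of ε, ΔT, δ and M. -/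

import Mathlib

/-- Global error estimate for the perturbed forward Euler scheme applied to the
slow ODE `U' = ε·F(U)`: abstract form of the paper's main theorem. -/
theorem stmt_0
    (F : ℝ → ℝ) (B L : ℝ) (hB : 0 < B) (hL : 0 < L)
    (hFdiff : Differentiable ℝ F)
    (hFbound : ∀ x : ℝ, |F x| ≤ B)
    (hFlip : ∀ x : ℝ, |deriv F x| ≤ L)
    (ε ΔT : ℝ) (hε : 0 < ε) (hΔT : 0 < ΔT)
    (M : ℕ)
    (U : ℝ → ℝ)
    (hU : ∀ t ∈ Set.Icc (0 : ℝ) ((M : ℝ) * ΔT), HasDerivAt U (ε * F (U t)) t)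
    (δ : ℝ) (hδ : 0 ≤ δ)
    (Ud : ℕ → ℝ) (η : ℕ → ℝ)
    (hU0 : Ud 0 = U 0)
    (hstep : ∀ m : ℕ, m < M → Ud (m + 1) = Ud m + ε * ΔT * (F (Ud m) + η m))
    (hη : ∀ m : ℕ, m < M → |η m| ≤ δ) :
    |Ud M - U ((M : ℝ) * ΔT)| ≤
      Real.exp (ε * L * (M : ℝ) * ΔT) * (ε * (M : ℝ) * ΔT) * (δ + ε * ΔT * L * B / 2) ∧
    ∀ K : ℝ, ε * (M : ℝ) * ΔT ≤ K →
      |Ud M - U ((M : ℝ) * ΔT)| ≤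
        Real.exp (L * K) * K * max 1 (L * B / 2) * (δ + ε * ΔT) := by
  -- F is L-Lipschitz
  have hFlipsch : ∀ x y : ℝ, |F x - F y| ≤ L * |x - y| := by
    intro x y
    have := Convex.norm_image_sub_le_of_norm_deriv_le (s := (Set.univ : Set ℝ))
      (fun z _ => hFdiff z) (fun z _ => hFlip z) convex_univ (Set.mem_univ y) (Set.mem_univ x)
    simpa [Real.norm_eq_abs] using this
  -- local truncation error
  have htrunc : ∀ m : ℕ, m < M →
      |U (((m : ℝ) + 1) * ΔT) - U ((m : ℝ) * ΔT) - ε * ΔT * F (U ((m : ℝ) * ΔT))| ≤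
        ε * ΔT * (ε * ΔT * L * B / 2) := by
    intro m hm
    set t0 : ℝ := (m : ℝ) * ΔT with ht0def
    set t1 : ℝ := ((m : ℝ) + 1) * ΔT with ht1def
    have ht01 : t0 ≤ t1 := by
      rw [ht0def, ht1def]; nlinarith [hΔT.le]
    have hsub : Set.Icc t0 t1 ⊆ Set.Icc 0 ((M : ℝ) * ΔT) := by
      apply Set.Icc_subset_Icc
      · positivity
      · have hm1 : (m : ℝ) + 1 ≤ (M : ℝ) := by exact_mod_cast hm
        rw [ht1def]; nlinarith [hΔT.le]
    have hUIcc : ∀ t ∈ Set.Icc t0 t1, HasDerivAt U (ε * F (U t)) t :=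
      fun t ht => hU t (hsub ht)
    -- U is (ε·B)-Lipschitz near t0
    have hUlip : ∀ t ∈ Set.Icc t0 t1, |U t - U t0| ≤ ε * B * (t - t0) := by
      intro t ht
      have h0 : t0 ∈ Set.Icc t0 t1 := Set.left_mem_Icc.2 ht01
      have := Convex.norm_image_sub_le_of_norm_hasDerivWithin_le
        (f := U) (f' := fun s => ε * F (U s)) (C := ε * B)
        (fun s hs => (hUIcc s hs).hasDerivWithinAt)
        (fun s _ => by
          rw [Real.norm_eq_abs, abs_mul, abs_of_pos hε]
          exact mul_le_mul_of_nonneg_left (hFbound _) hε.le)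
        (convex_Icc _ _) h0 ht
      rw [Real.norm_eq_abs, Real.norm_eq_abs, abs_of_nonneg (sub_nonneg.2 ht.1)] at this
      exact this
    -- derivative of the comparison function
    have hg : ∀ t ∈ Set.uIcc t0 t1,
        HasDerivAt (fun s => U s - ε * F (U t0) * s) (ε * (F (U t) - F (U t0))) t := by
      intro t ht
      rw [Set.uIcc_of_le ht01] at ht
      have h1 : HasDerivAt (fun s => U s - ε * F (U t0) * s) (ε * F (U t) - ε * F (U t0) * 1) t :=
        (hUIcc t ht).sub ((hasDerivAt_id t).const_mul (ε * F (U t0)))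
      convert h1 using 1; ring
    have hUcont : ContinuousOn U (Set.uIcc t0 t1) := by
      rw [Set.uIcc_of_le ht01]
      exact fun t ht => (hUIcc t ht).continuousAt.continuousWithinAt
    have hcont : ContinuousOn (fun t => ε * (F (U t) - F (U t0))) (Set.uIcc t0 t1) :=
      continuousOn_const.mul ((hFdiff.continuous.comp_continuousOn hUcont).sub continuousOn_const)
    have hint : IntervalIntegrable (fun t => ε * (F (U t) - F (U t0))) MeasureTheory.volume t0 t1 :=
      hcont.intervalIntegrable
    have heq := intervalIntegral.integral_eq_sub_of_hasDerivAt hg hint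
    -- a.e. bound
    have hbound : ∀ t ∈ Set.uIoc t0 t1,
        ‖ε * (F (U t) - F (U t0))‖ ≤ ε * L * (ε * B) * (t - t0) := by
      intro t ht
      rw [Set.uIoc_of_le ht01] at ht
      have ht' : t ∈ Set.Icc t0 t1 := Set.Ioc_subset_Icc_self ht
      calc ‖ε * (F (U t) - F (U t0))‖ = ε * |F (U t) - F (U t0)| := by
            rw [Real.norm_eq_abs, abs_mul, abs_of_pos hε]
        _ ≤ ε * (L * |U t - U t0|) :=
            mul_le_mul_of_nonneg_left (hFlipsch _ _) hε.le
        _ ≤ ε * (L * (ε * B * (t - t0))) := by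
            have := hUlip t ht'
            gcongr
        _ = ε * L * (ε * B) * (t - t0) := by ring
    have hgint : IntervalIntegrable (fun t => ε * L * (ε * B) * (t - t0))
        MeasureTheory.volume t0 t1 :=
      (continuousOn_const.mul (continuousOn_id.sub continuousOn_const)).intervalIntegrable
    have hnorm := intervalIntegral.norm_integral_le_abs_of_norm_le
      (f := fun t => ε * (F (U t) - F (U t0)))
      ((MeasureTheory.ae_restrict_iff' measurableSet_uIoc).mpr
        (MeasureTheory.ae_of_all _ hbound)) hgint
    -- compute the bounding integral
    have hcalc : (∫ t in t0..t1, ε * L * (ε * B) * (t - t0)) = ε * ΔT * (ε * ΔT * L * B / 2) := by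
      rw [intervalIntegral.integral_const_mul,
        intervalIntegral.integral_comp_sub_right (fun x => x) t0, integral_id]
      rw [show t1 - t0 = ΔT from by rw [ht0def, ht1def]; ring, sub_self]
      ring
    rw [heq, hcalc,
      abs_of_nonneg (by positivity : (0:ℝ) ≤ ε * ΔT * (ε * ΔT * L * B / 2))] at hnorm
    have h10 : t1 - t0 = ΔT := by rw [ht0def, ht1def]; ring
    have hgoal : U t1 - U t0 - ε * ΔT * F (U t0) =
        (U t1 - ε * F (U t0) * t1) - (U t0 - ε * F (U t0) * t0) := by
      rw [← h10]; ring
    rw [hgoal]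
    simpa [Real.norm_eq_abs] using hnorm
  -- discrete Gronwall induction
  set a : ℝ := ε * L * ΔT with ha_def
  have ha : 0 ≤ a := by positivity
  set b : ℝ := ε * ΔT * (δ + ε * ΔT * L * B / 2) with hb_def
  have hb : 0 ≤ b := by positivity
  have key : ∀ m : ℕ, m ≤ M → |Ud m - U ((m : ℝ) * ΔT)| ≤ (1 + a) ^ m * ((m : ℝ) * b) := by
    intro m
    induction m with
    | zero => intro _; simp [hU0]
    | succ n ih =>
      intro hn
      have hnM : n < M := hn
      have ihn := ih hnM.le
      have hrec := hstep n hnM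
      have htr := htrunc n hnM
      have hηn := hη n hnM
      have hdecomp : Ud (n + 1) - U ((↑(n + 1) : ℝ) * ΔT) =
          (Ud n - U ((n : ℝ) * ΔT)) + ε * ΔT * (F (Ud n) - F (U ((n : ℝ) * ΔT)))
          + ε * ΔT * η n
          - (U (((n : ℝ) + 1) * ΔT) - U ((n : ℝ) * ΔT) - ε * ΔT * F (U ((n : ℝ) * ΔT))) := by
        rw [hrec]; push_cast; ring
      have tineq : ∀ x y z w : ℝ, |x + y + z - w| ≤ |x| + |y| + |z| + |w| := by
        intro x y z w
        calc |x + y + z - w| ≤ |x + y + z| + |w| := abs_sub _ _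
          _ ≤ (|x + y| + |z|) + |w| := by gcongr; exact abs_add_le _ _
          _ ≤ (|x| + |y| + |z|) + |w| := by gcongr; exact abs_add_le _ _
          _ = |x| + |y| + |z| + |w| := by ring
      have h2 : |ε * ΔT * (F (Ud n) - F (U ((n : ℝ) * ΔT)))| ≤
          ε * ΔT * (L * |Ud n - U ((n : ℝ) * ΔT)|) := by
        rw [abs_mul, abs_of_pos (by positivity : (0:ℝ) < ε * ΔT)]
        exact mul_le_mul_of_nonneg_left (hFlipsch _ _) (by positivity)
      have h3 : |ε * ΔT * η n| ≤ ε * ΔT * δ := by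
        rw [abs_mul, abs_of_pos (by positivity : (0:ℝ) < ε * ΔT)]
        exact mul_le_mul_of_nonneg_left hηn (by positivity)
      have hab : (1 + a) * |Ud n - U ((n : ℝ) * ΔT)| + b =
          |Ud n - U ((n : ℝ) * ΔT)| + ε * ΔT * (L * |Ud n - U ((n : ℝ) * ΔT)|)
            + ε * ΔT * δ + ε * ΔT * (ε * ΔT * L * B / 2) := by
        rw [ha_def, hb_def]; ring
      have step : |Ud (n + 1) - U ((↑(n + 1) : ℝ) * ΔT)| ≤
          (1 + a) * |Ud n - U ((n : ℝ) * ΔT)| + b := by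
        rw [hdecomp, hab]
        have htri := tineq (Ud n - U ((n : ℝ) * ΔT))
          (ε * ΔT * (F (Ud n) - F (U ((n : ℝ) * ΔT)))) (ε * ΔT * η n)
          (U (((n : ℝ) + 1) * ΔT) - U ((n : ℝ) * ΔT) - ε * ΔT * F (U ((n : ℝ) * ΔT)))
        linarith
      have hpow1 : (1 : ℝ) ≤ (1 + a) ^ (n + 1) := by simpa using pow_le_pow_left₀ (by norm_num : (0:ℝ) ≤ 1) (by linarith : (1:ℝ) ≤ 1 + a) (n + 1)
      calc |Ud (n + 1) - U ((↑(n + 1) : ℝ) * ΔT)|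
          ≤ (1 + a) * |Ud n - U ((n : ℝ) * ΔT)| + b := step
        _ ≤ (1 + a) * ((1 + a) ^ n * ((n : ℝ) * b)) + b := by gcongr
        _ = (1 + a) ^ (n + 1) * ((n : ℝ) * b) + b := by ring
        _ ≤ (1 + a) ^ (n + 1) * ((n : ℝ) * b) + (1 + a) ^ (n + 1) * b := by
            nlinarith [hpow1, hb]
        _ = (1 + a) ^ (n + 1) * ((↑(n + 1) : ℝ) * b) := by push_cast; ring
  have hmain := key M le_rfl
  have hexp : (1 + a) ^ M ≤ Real.exp (ε * L * (M : ℝ) * ΔT) := by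
    calc (1 + a) ^ M ≤ (Real.exp a) ^ M :=
          pow_le_pow_left₀ (by linarith) (by linarith [Real.add_one_le_exp a]) M
      _ = Real.exp ((M : ℝ) * a) := by rw [← Real.exp_nat_mul]
      _ = Real.exp (ε * L * (M : ℝ) * ΔT) := by
          congr 1
          rw [ha_def]; ring
  have h1 : |Ud M - U ((M : ℝ) * ΔT)| ≤
      Real.exp (ε * L * (M : ℝ) * ΔT) * (ε * (M : ℝ) * ΔT) * (δ + ε * ΔT * L * B / 2) := by
    calc |Ud M - U ((M : ℝ) * ΔT)| ≤ (1 + a) ^ M * ((M : ℝ) * b) := hmain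
      _ ≤ Real.exp (ε * L * (M : ℝ) * ΔT) * ((M : ℝ) * b) := by gcongr
      _ = Real.exp (ε * L * (M : ℝ) * ΔT) * (ε * (M : ℝ) * ΔT) * (δ + ε * ΔT * L * B / 2) := by
          rw [hb_def]; ring
  refine ⟨h1, ?_⟩
  intro K hK
  have hεM : (0 : ℝ) ≤ ε * (M : ℝ) * ΔT := by positivity
  have hKnn : 0 ≤ K := le_trans hεM hK
  have hmax : δ + ε * ΔT * L * B / 2 ≤ max 1 (L * B / 2) * (δ + ε * ΔT) := by
    have h1' : δ ≤ max 1 (L * B / 2) * δ :=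
      le_mul_of_one_le_left hδ (le_max_left _ _)
    have h2' : ε * ΔT * L * B / 2 ≤ max 1 (L * B / 2) * (ε * ΔT) := by
      have : ε * ΔT * L * B / 2 = (L * B / 2) * (ε * ΔT) := by ring
      rw [this]
      exact mul_le_mul_of_nonneg_right (le_max_right _ _) (by positivity)
    linarith
  calc |Ud M - U ((M : ℝ) * ΔT)|
      ≤ Real.exp (ε * L * (M : ℝ) * ΔT) * (ε * (M : ℝ) * ΔT) * (δ + ε * ΔT * L * B / 2) := h1
    _ ≤ Real.exp (L * K) * K * (max 1 (L * B / 2) * (δ + ε * ΔT)) := by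
        have hexp2 : Real.exp (ε * L * (M : ℝ) * ΔT) ≤ Real.exp (L * K) := by
          apply Real.exp_le_exp.2
          calc ε * L * (M : ℝ) * ΔT = L * (ε * (M : ℝ) * ΔT) := by ring
            _ ≤ L * K := mul_le_mul_of_nonneg_left hK hL.le
        have hd : (0 : ℝ) ≤ δ + ε * ΔT * L * B / 2 := by positivity
        gcongr
    _ = Real.exp (L * K) * K * max 1 (L * B / 2) * (δ + ε * ΔT) := by ring
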